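/- The value of the polynomial P_t at T = 1 equals n! times the Lebesgue volume of Δ: P_t(1) = n!·vol(Δ). -/

import Mathlib

open scoped BigOperators ENNReal

noncomputable section

/-- The cone `C(Δ) = ℝ_{≥0}·Δ` generated by `Δ`. -/
def coneOf {n : ℕ} (Δ : Set (Fin n → ℝ)) : Set (Fin n → ℝ) :=
  {u | ∃ r : ℝ, 0 ≤ r ∧ ∃ d ∈ Δ, u = r • d}

/-- The lattice points `L_t(Δ) = C(Δ) ∩ (t/N + ℤⁿ)`. -/
def latticePts {n : ℕ} (Δ : Set (Fin n → ℝ)) (N : ℕ) (t : Fin n → ℤ) : Set (Fin n → ℝ) :=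
  {u | u ∈ coneOf Δ ∧ ∃ z : Fin n → ℤ, ∀ j, u j = (t j : ℝ) / (N : ℝ) + (z j : ℝ)}

/-- `W_t(k)`, the number of points of `L_t(Δ)` of degree `k/M`; the degree is the
gauge (Minkowski functional) of `Δ`. -/
noncomputable def Wcount {n : ℕ} (Δ : Set (Fin n → ℝ)) (N M : ℕ) (t : Fin n → ℤ) (k : ℕ) : ℕ :=
  Set.ncard {u | u ∈ latticePts Δ N t ∧ gauge Δ u = (k : ℝ) / (M : ℝ)}

section Aux

open PowerSeries Finset Filter Topology MeasureTheory Metric Set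
open scoped Pointwise

/-! ### Power series lemmas -/

lemma aux_coeff_one_sub_X_pow_mul (M : ℕ) (f : PowerSeries ℤ) (j : ℕ) :
    PowerSeries.coeff (R := ℤ) j ((1 - PowerSeries.X ^ M) * f)
      = PowerSeries.coeff (R := ℤ) j f - (if M ≤ j then PowerSeries.coeff (R := ℤ) (j - M) f else 0) := by
  rw [sub_mul, one_mul, map_sub, PowerSeries.coeff_X_pow_mul']

lemma aux_coeff_one_sub_X_mul (f : PowerSeries ℤ) (j : ℕ) :
    PowerSeries.coeff (R := ℤ) j ((1 - PowerSeries.X) * f)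
      = PowerSeries.coeff (R := ℤ) j f - (if 1 ≤ j then PowerSeries.coeff (R := ℤ) (j - 1) f else 0) := by
  have := aux_coeff_one_sub_X_pow_mul 1 f j
  simpa using this

lemma aux_sub_div_M (M j : ℕ) (hM : 0 < M) (h : M ≤ j) : (j - M) / M = j / M - 1 := by
  obtain ⟨q, r, hr, rfl⟩ : ∃ q r, r < M ∧ j = M * q + r :=
    ⟨j / M, j % M, Nat.mod_lt _ hM, (Nat.div_add_mod j M).symm⟩
  have hq : 1 ≤ q := by
    rcases Nat.eq_zero_or_pos q with rfl | h1
    · omega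
    · exact h1
  have h1 : M * q + r - M = M * (q - 1) + r := by
    have : M * q = M * (q-1) + M := by
      cases q with
      | zero => omega
      | succ q' => simp [Nat.mul_succ]
    omega
  rw [h1, Nat.mul_add_div hM, Nat.mul_add_div hM, Nat.div_eq_of_lt hr]
  omega

lemma aux_step_lemma (M : ℕ) (hM : 0 < M) (n : ℕ) :
    (1 - PowerSeries.X ^ M) * PowerSeries.mk (fun j => ((j / M + (n+1)).choose (n+1) : ℤ))
      = PowerSeries.mk (fun j => ((j / M + n).choose n : ℤ)) := by
  ext j
  rw [aux_coeff_one_sub_X_pow_mul]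
  simp only [PowerSeries.coeff_mk]
  split_ifs with h
  · rw [aux_sub_div_M M j hM h]
    have hq : 1 ≤ j / M := (Nat.one_le_div_iff hM).2 h
    obtain ⟨q, hq'⟩ : ∃ q, j / M = q + 1 := ⟨j / M - 1, by omega⟩
    rw [hq']
    have : (q + 1 + (n+1)).choose (n+1) = (q + (n+1)).choose n + (q + (n+1)).choose (n+1) := by
      have := Nat.choose_succ_succ (q + (n+1)) n
      convert this using 2 <;> omega
    rw [this]
    have h3 : q + 1 + n = q + (n+1) := by omega
    push_cast
    rw [h3]
    ring
  · have hj : j / M = 0 := by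
      rw [Nat.div_eq_of_lt]; omega
    rw [hj]
    simp

lemma aux_ps_key (M : ℕ) (hM : 0 < M) : ∀ n : ℕ,
    (1 - PowerSeries.X) * ((1 - PowerSeries.X ^ M) ^ n
      * PowerSeries.mk (fun j => ((j / M + n).choose n : ℤ))) = 1 := by
  intro n
  induction n with
  | zero =>
    simp only [pow_zero, one_mul]
    ext j
    rw [aux_coeff_one_sub_X_mul]
    simp only [PowerSeries.coeff_mk, Nat.choose_zero_right, PowerSeries.coeff_one]
    split_ifs <;> simp_all
  | succ n ih =>
    calc (1 - PowerSeries.X) * ((1 - PowerSeries.X ^ M) ^ (n+1)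
          * PowerSeries.mk (fun j => ((j / M + (n+1)).choose (n+1) : ℤ)))
        = (1 - PowerSeries.X) * ((1 - PowerSeries.X ^ M) ^ n
          * ((1 - PowerSeries.X ^ M)
            * PowerSeries.mk (fun j => ((j / M + (n+1)).choose (n+1) : ℤ)))) := by
          ring
      _ = 1 := by rw [aux_step_lemma M hM n]; exact ih

lemma aux_partial_sum_mul (W : ℕ → ℤ) :
    (1 - PowerSeries.X) * PowerSeries.mk (fun j => ∑ k ∈ Finset.range (j+1), W k)
      = PowerSeries.mk W := by
  ext j
  rw [aux_coeff_one_sub_X_mul]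
  simp only [PowerSeries.coeff_mk]
  cases j with
  | zero => simp
  | succ j =>
    simp only [Nat.le_add_left, if_pos, Nat.add_sub_cancel]
    rw [Finset.sum_range_succ]
    simp

lemma aux_partial_sum_eq (M : ℕ) (hM : 0 < M) (n : ℕ) (W c : ℕ → ℤ) (l : ℕ)
    (hc : ∀ k, PowerSeries.coeff (R := ℤ) k ((1 - PowerSeries.X ^ M) ^ n * PowerSeries.mk W) = c k)
    (hcl : ∀ k, l < k → c k = 0) (j : ℕ) (hj : l ≤ j) :
    ∑ k ∈ Finset.range (j+1), W k
      = ∑ k ∈ Finset.range (l+1), c k * (((j - k) / M + n).choose n : ℤ) := by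
  set G := PowerSeries.mk (fun j => ((j / M + n).choose n : ℤ)) with hG
  set A := PowerSeries.mk (fun j => ∑ k ∈ Finset.range (j+1), W k) with hA
  have key : A = ((1 - PowerSeries.X ^ M) ^ n * PowerSeries.mk W) * G := by
    calc A = ((1 - PowerSeries.X) * ((1 - PowerSeries.X ^ M) ^ n * G)) * A := by
            rw [aux_ps_key M hM n, one_mul]
      _ = ((1 - PowerSeries.X ^ M) ^ n * ((1 - PowerSeries.X) * A)) * G := by ring
      _ = ((1 - PowerSeries.X ^ M) ^ n * PowerSeries.mk W) * G := by
            rw [hA, aux_partial_sum_mul]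
  have hkey := congrArg (PowerSeries.coeff (R := ℤ) j) key
  rw [PowerSeries.coeff_mk] at hkey
  rw [hkey, PowerSeries.coeff_mul, Finset.Nat.sum_antidiagonal_eq_sum_range_succ
    (f := fun a b => PowerSeries.coeff (R := ℤ) a ((1 - PowerSeries.X ^ M) ^ n * PowerSeries.mk W)
      * PowerSeries.coeff (R := ℤ) b G)]
  simp only [hc, hG, PowerSeries.coeff_mk]
  symm
  apply Finset.sum_subset
  · intro k hk
    simp only [Finset.mem_range] at *
    omega
  · intro k hk hk'
    simp only [Finset.mem_range] at *
    rw [hcl k (by omega)]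
    ring

/-! ### Binomial limit -/

lemma aux_choose_div_pow_tendsto (n d : ℕ) :
    Tendsto (fun m : ℕ => (((m - d + n).choose n : ℕ) : ℝ) / (m : ℝ)^n) atTop
      (𝓝 (1 / (n.factorial : ℝ))) := by
  have hfac : (0:ℝ) < (n.factorial : ℝ) := by positivity
  have key : ∀ m : ℕ, d ≤ m → (((m - d + n).choose n : ℕ) : ℝ) / (m:ℝ)^n
      = (∏ i ∈ Finset.range n, (((m:ℝ) - d + n - i) / m)) / (n.factorial : ℝ) := by
    intro m hm
    have h1 : (m - d + n).descFactorial n = n.factorial * (m - d + n).choose n :=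
      Nat.descFactorial_eq_factorial_mul_choose _ _
    have h2 : (m - d + n).descFactorial n = ∏ i ∈ Finset.range n, (m - d + n - i) :=
      Nat.descFactorial_eq_prod_range _ _
    have h3 : (((m - d + n).choose n : ℕ) : ℝ)
        = (∏ i ∈ Finset.range n, ((m - d + n - i : ℕ) : ℝ)) / (n.factorial : ℝ) := by
      rw [eq_div_iff hfac.ne', ← Nat.cast_prod, ← h2, h1]
      push_cast; ring
    have h5 : ∀ i ∈ Finset.range n, ((m - d + n - i : ℕ) : ℝ) = (m:ℝ) - d + n - i := by
      intro i hi
      simp only [Finset.mem_range] at hi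
      have h5' : i ≤ m - d + n := by omega
      push_cast [Nat.cast_sub h5', Nat.cast_sub hm]
      ring
    have h6 : ∏ i ∈ Finset.range n, (((m:ℝ) - d + n - i)/m)
        = (∏ i ∈ Finset.range n, ((m:ℝ) - d + n - i)) / (m:ℝ)^n := by
      rw [Finset.prod_div_distrib, Finset.prod_const, Finset.card_range]
    rw [h3, h6, Finset.prod_congr rfl h5]
    ring
  have hlim : Tendsto (fun m : ℕ =>
      (∏ i ∈ Finset.range n, (((m:ℝ) - d + n - i) / m)) / (n.factorial : ℝ)) atTop
      (𝓝 (1 / (n.factorial : ℝ))) := by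
    have hprod : Tendsto (fun m : ℕ => ∏ i ∈ Finset.range n, (((m:ℝ) - d + n - i) / m))
        atTop (𝓝 (∏ _i ∈ Finset.range n, (1:ℝ))) := by
      apply tendsto_finset_prod
      intro i _
      have h7 : Tendsto (fun m : ℕ => 1 + (-(d:ℝ) + n - i) / m) atTop (𝓝 (1 + 0)) := by
        apply Tendsto.add tendsto_const_nhds
        exact Tendsto.div_atTop tendsto_const_nhds tendsto_natCast_atTop_atTop
      have heq : ∀ᶠ m : ℕ in atTop, 1 + (-(d:ℝ) + n - i) / m = ((m:ℝ) - d + n - i) / m := by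
        filter_upwards [eventually_ge_atTop 1] with m hm
        have hm' : (m:ℝ) ≠ 0 := by positivity
        field_simp
        ring
      simpa using h7.congr' heq
    simpa using hprod.div_const _
  apply hlim.congr'
  filter_upwards [eventually_ge_atTop d] with m hm
  exact (key m hm).symm

/-! ### Geometry: counting lattice points vs volume -/

abbrev auxCube {n : ℕ} (v : Fin n → ℝ) (r : ℝ) : Set (Fin n → ℝ) :=
  Set.univ.pi fun j => Set.Ico (v j) (v j + r)

lemma auxCube_measurable {n : ℕ} (v : Fin n → ℝ) (r : ℝ) : MeasurableSet (auxCube v r) :=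
  MeasurableSet.univ_pi fun _ => measurableSet_Ico

lemma auxCube_volume {n : ℕ} (v : Fin n → ℝ) (r : ℝ) :
    volume (auxCube v r) = (ENNReal.ofReal r)^n := by
  rw [volume_pi_pi]
  simp [Real.volume_Ico]

lemma aux_dist_le_of_mem_cube {n : ℕ} {v x : Fin n → ℝ} {r : ℝ} (hr : 0 ≤ r)
    (hx : x ∈ auxCube v r) : dist x v ≤ r := by
  rw [dist_pi_le_iff hr]
  intro i
  have := hx i (Set.mem_univ i)
  rw [Real.dist_eq, abs_le]
  simp only [Set.mem_Ico] at this
  constructor <;> linarith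

/-- inner parallel set -/
def auxInner {n : ℕ} (Δ : Set (Fin n → ℝ)) (r : ℝ) : Set (Fin n → ℝ) :=
  {x | ∀ y : Fin n → ℝ, dist y x ≤ r → y ∈ Δ}

lemma auxInner_antitone {n : ℕ} (Δ : Set (Fin n → ℝ)) {r r' : ℝ} (h : r' ≤ r) :
    auxInner Δ r ⊆ auxInner Δ r' := fun x hx y hy => hx y (hy.trans h)

lemma aux_interior_subset_iUnion_inner {n : ℕ} (Δ : Set (Fin n → ℝ)) :
    interior Δ ⊆ ⋃ k : ℕ, auxInner Δ (1/(k+1)) := by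
  intro x hx
  rw [mem_interior_iff_mem_nhds, Metric.mem_nhds_iff] at hx
  obtain ⟨ε, hε, hball⟩ := hx
  obtain ⟨k, hk⟩ := exists_nat_one_div_lt hε
  refine Set.mem_iUnion.2 ⟨k, fun y hy => hball ?_⟩
  rw [Metric.mem_ball]
  calc dist y x ≤ 1/(k+1) := by exact_mod_cast hy
    _ < ε := by exact_mod_cast hk
lemma aux_count_div_tendsto (n : ℕ) (Δ : Set (Fin n → ℝ)) (hconv : Convex ℝ Δ)
    (hcomp : IsCompact Δ) (w : Fin n → ℝ)
    (hfin : ∀ m : ℕ, ({u | (∃ z : Fin n → ℤ, ∀ j, u j = w j + (z j : ℝ)) ∧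
      u ∈ (m : ℝ) • Δ}).Finite) :
    Tendsto (fun m : ℕ =>
      (Set.ncard {u | (∃ z : Fin n → ℤ, ∀ j, u j = w j + (z j : ℝ)) ∧ u ∈ (m : ℝ) • Δ} : ℝ≥0∞)
        * (ENNReal.ofReal (1/(m:ℝ)))^n) atTop (𝓝 (volume Δ)) := by
  set Cnt : ℕ → Set (Fin n → ℝ) :=
    fun m => {u | (∃ z : Fin n → ℤ, ∀ j, u j = w j + (z j : ℝ)) ∧ u ∈ (m : ℝ) • Δ} with hCnt
  set g : ℕ → ℝ≥0∞ := fun m => (Set.ncard (Cnt m) : ℝ≥0∞) * (ENNReal.ofReal (1/(m:ℝ)))^n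
    with hg
  -- the scaled point set
  set V : ℕ → Set (Fin n → ℝ) := fun m => ((m : ℝ)⁻¹ • ·) '' Cnt m with hV
  have hVfin : ∀ m, (V m).Finite := fun m => (hfin m).image _
  have hVcard : ∀ m : ℕ, 1 ≤ m → (V m).ncard = (Cnt m).ncard := by
    intro m hm
    apply Set.ncard_image_of_injective
    apply smul_right_injective
    simp only [ne_eq, _root_.inv_eq_zero, Nat.cast_eq_zero]
    omega
  -- properties of points of V m
  have hVΔ : ∀ m : ℕ, 1 ≤ m → V m ⊆ Δ := by
    intro m hm v hv
    obtain ⟨u, ⟨hz, d, hd, hdu⟩, rfl⟩ := hv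
    show (m:ℝ)⁻¹ • u ∈ Δ
    have hdu' : (m:ℝ) • d = u := hdu
    rw [← hdu', smul_smul, inv_mul_cancel₀ (Nat.cast_ne_zero.2 (by omega)), one_smul]
    exact hd
  have hVlat : ∀ m : ℕ, ∀ v ∈ V m, ∃ z : Fin n → ℤ, ∀ j, v j = (w j + z j) / m := by
    intro m v hv
    obtain ⟨u, ⟨⟨z, hz⟩, _⟩, rfl⟩ := hv
    exact ⟨z, fun j => by simp [hz j, div_eq_inv_mul]⟩
  -- disjointness of cubes
  have hdisj : ∀ m : ℕ, 1 ≤ m → ((hVfin m).toFinset : Set (Fin n → ℝ)).PairwiseDisjoint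
      (fun v => auxCube v (1/(m:ℝ))) := by
    intro m hm v hv v' hv' hne
    simp only [Set.Finite.coe_toFinset] at hv hv'
    obtain ⟨z, hz⟩ := hVlat m v hv
    obtain ⟨z', hz'⟩ := hVlat m v' hv'
    have hmpos : (0:ℝ) < m := by exact_mod_cast hm
    refine Set.disjoint_left.2 fun x hx hx' => hne ?_
    ext j
    have h1 := hx j (Set.mem_univ j)
    have h2 := hx' j (Set.mem_univ j)
    simp only [Set.mem_Ico] at h1 h2
    rw [hz j, hz' j] at *
    have : z j = z' j := by
      by_contra hzz
      have : (1:ℝ) ≤ |(z j : ℝ) - z' j| := by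
        have : z j - z' j ≠ 0 := sub_ne_zero.2 fun h => hzz (by exact_mod_cast h)
        calc (1:ℝ) = ((1:ℤ) : ℝ) := by norm_num
          _ ≤ |((z j - z' j : ℤ) : ℝ)| := by
              exact_mod_cast Int.one_le_abs (by exact_mod_cast this)
          _ = |(z j : ℝ) - z' j| := by push_cast; ring_nf
      have hlt : |(w j + z j)/(m:ℝ) - (w j + z' j)/m| < 1/m := by
        rw [abs_lt]; constructor <;> [linarith [h1.1, h1.2, h2.1, h2.2];
          linarith [h1.1, h1.2, h2.1, h2.2]]
      rw [div_sub_div_same, abs_div, abs_of_pos hmpos, div_lt_div_iff₀ hmpos hmpos] at hlt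
      have : (w j + z j) - (w j + z' j) = (z j : ℝ) - z' j := by ring
      rw [this] at hlt
      nlinarith [abs_nonneg ((z j : ℝ) - z' j)]
    rw [this]
  -- upper bound
  have hupper : ∀ m : ℕ, 1 ≤ m → g m ≤ volume (Metric.cthickening (1/(m:ℝ)) Δ) := by
    intro m hm
    have hmpos : (0:ℝ) < m := by exact_mod_cast hm
    have hsub : (⋃ v ∈ (hVfin m).toFinset, auxCube v (1/(m:ℝ)))
        ⊆ Metric.cthickening (1/(m:ℝ)) Δ := by
      intro x hx
      simp only [Finset.mem_coe, Set.mem_iUnion, Set.Finite.mem_toFinset] at hx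
      obtain ⟨v, hv, hxv⟩ := hx
      exact Metric.mem_cthickening_of_dist_le x v _ _ (hVΔ m hm hv)
        (aux_dist_le_of_mem_cube (by positivity) hxv)
    have hcard : (Cnt m).ncard = ((hVfin m).toFinset).card := by
      rw [← hVcard m hm, Set.ncard_eq_toFinset_card (V m) (hVfin m)]
    calc g m = ∑ v ∈ (hVfin m).toFinset, volume (auxCube v (1/(m:ℝ))) := by
          simp only [hg, auxCube_volume, Finset.sum_const, nsmul_eq_mul, hcard]
      _ = volume (⋃ v ∈ (hVfin m).toFinset, auxCube v (1/(m:ℝ))) :=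
          (measure_biUnion_finset (hdisj m hm) fun v _ => auxCube_measurable v _).symm
      _ ≤ volume (Metric.cthickening (1/(m:ℝ)) Δ) := measure_mono hsub
  -- lower bound
  have hlower : ∀ m : ℕ, 1 ≤ m → volume (auxInner Δ (1/(m:ℝ))) ≤ g m := by
    intro m hm
    have hmpos : (0:ℝ) < m := by exact_mod_cast hm
    have hsub : auxInner Δ (1/(m:ℝ)) ⊆ ⋃ v ∈ (hVfin m).toFinset, auxCube v (1/(m:ℝ)) := by
      intro x hx
      set z : Fin n → ℤ := fun j => ⌊(m : ℝ) * x j - w j⌋ with hzdef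
      set v : Fin n → ℝ := fun j => (w j + z j) / m with hvdef
      have hxv : x ∈ auxCube v (1/(m:ℝ)) := by
        intro j _
        simp only [Set.mem_Ico, hvdef, hzdef]
        constructor
        · rw [div_le_iff₀ hmpos]
          have := Int.floor_le ((m : ℝ) * x j - w j)
          linarith
        · rw [← add_div, lt_div_iff₀ hmpos]
          have := Int.lt_floor_add_one ((m : ℝ) * x j - w j)
          push_cast
          linarith
      have hvΔ : v ∈ Δ := hx v (by rw [dist_comm]; exact aux_dist_le_of_mem_cube (by positivity) hxv)
      have hvV : v ∈ V m := by
        refine ⟨(m:ℝ) • v, ⟨⟨z, fun j => ?_⟩, Set.smul_mem_smul_set hvΔ⟩, ?_⟩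
        · simp only [Pi.smul_apply, smul_eq_mul, hvdef]
          field_simp
        · show (m:ℝ)⁻¹ • ((m:ℝ) • v) = v
          rw [smul_smul, inv_mul_cancel₀ hmpos.ne', one_smul]
      simp only [Set.mem_iUnion, Set.Finite.mem_toFinset]
      exact ⟨v, hvV, hxv⟩
    calc volume (auxInner Δ (1/(m:ℝ)))
        ≤ volume (⋃ v ∈ (hVfin m).toFinset, auxCube v (1/(m:ℝ))) := measure_mono hsub
      _ = ∑ v ∈ (hVfin m).toFinset, volume (auxCube v (1/(m:ℝ))) :=
          measure_biUnion_finset (hdisj m hm) fun v _ => auxCube_measurable v _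
      _ = g m := by
          have hcard : (Cnt m).ncard = ((hVfin m).toFinset).card := by
            rw [← hVcard m hm, Set.ncard_eq_toFinset_card (V m) (hVfin m)]
          simp only [hg, auxCube_volume, Finset.sum_const, nsmul_eq_mul, hcard]
  -- limsup bound
  have hthick : Tendsto (fun m : ℕ => volume (Metric.cthickening (1/(m:ℝ)) Δ)) atTop
      (𝓝 (volume Δ)) :=
    (tendsto_measure_cthickening_of_isCompact hcomp).comp tendsto_one_div_atTop_nhds_zero_nat
  have hlimsup : limsup g atTop ≤ volume Δ := by
    have h1 : limsup g atTop ≤ limsup (fun m : ℕ =>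
        volume (Metric.cthickening (1/(m:ℝ)) Δ)) atTop :=
      Filter.limsup_le_limsup (by
        filter_upwards [eventually_ge_atTop 1] with m hm
        exact hupper m hm)
    rw [hthick.limsup_eq] at h1
    exact h1
  -- liminf bound
  have hIk : ∀ k : ℕ, volume (auxInner Δ (1/((k:ℝ)+1))) ≤ liminf g atTop := by
    intro k
    have h1 : ∀ᶠ m : ℕ in atTop, volume (auxInner Δ (1/((k:ℝ)+1))) ≤ g m := by
      filter_upwards [eventually_ge_atTop (k+1)] with m hm
      refine le_trans (measure_mono (auxInner_antitone Δ ?_)) (hlower m (by omega))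
      have h2 : (0:ℝ) < (k:ℝ)+1 := by positivity
      have h3 : ((k:ℝ)+1) ≤ m := by exact_mod_cast hm
      apply one_div_le_one_div_of_le h2 h3
    calc volume (auxInner Δ (1/((k:ℝ)+1)))
        = liminf (fun _ : ℕ => volume (auxInner Δ (1/((k:ℝ)+1)))) atTop := by
          rw [liminf_const]
      _ ≤ liminf g atTop := Filter.liminf_le_liminf h1
  have hliminf : volume Δ ≤ liminf g atTop := by
    have hmono : Monotone (fun k : ℕ => auxInner Δ (1/((k:ℝ)+1))) := by
      intro a b hab
      apply auxInner_antitone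
      have : ((a:ℝ)+1) ≤ (b:ℝ)+1 := by exact_mod_cast Nat.add_le_add_right hab 1
      exact one_div_le_one_div_of_le (by positivity) this
    have hU : Tendsto (fun k : ℕ => volume (auxInner Δ (1/((k:ℝ)+1)))) atTop
        (𝓝 (volume (⋃ k : ℕ, auxInner Δ (1/((k:ℝ)+1))))) :=
      tendsto_measure_iUnion_atTop hmono
    have h2 : volume Δ ≤ volume (⋃ k : ℕ, auxInner Δ (1/((k:ℝ)+1))) := by
      have hfr : volume (frontier Δ) = 0 := hconv.addHaar_frontier volume
      have hclo : closure Δ = Δ := hcomp.isClosed.closure_eq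
      have h3 : volume Δ ≤ volume (interior Δ) := by
        have hsub2 : Δ ⊆ interior Δ ∪ frontier Δ := by
          intro x hx
          by_cases h : x ∈ interior Δ
          · exact Or.inl h
          · exact Or.inr ⟨subset_closure hx, h⟩
        calc volume Δ ≤ volume (interior Δ ∪ frontier Δ) := measure_mono hsub2
          _ ≤ volume (interior Δ) + volume (frontier Δ) := measure_union_le _ _
          _ = volume (interior Δ) := by rw [hfr, add_zero]
      exact h3.trans (measure_mono (aux_interior_subset_iUnion_inner Δ))
    refine h2.trans (le_of_tendsto hU (Filter.Eventually.of_forall fun k => hIk k))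
  exact tendsto_of_le_liminf_of_limsup_le hliminf hlimsup
lemma aux_mem_smul_iff_gauge {n : ℕ} (Δ : Set (Fin n → ℝ)) (hconv : Convex ℝ Δ)
    (hcl : IsClosed Δ) (h0 : (0 : Fin n → ℝ) ∈ Δ) {m : ℝ} (hm : 0 < m) (u : Fin n → ℝ) :
    (u ∈ coneOf Δ ∧ gauge Δ u ≤ m) ↔ u ∈ m • Δ := by
  constructor
  · rintro ⟨⟨r, hr, d, hd, rfl⟩, hgu⟩
    rcases eq_or_lt_of_le hr with rfl | hrpos
    · rw [zero_smul]
      exact ⟨0, h0, smul_zero m⟩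
    have hne : {r' : ℝ | 0 < r' ∧ r • d ∈ r' • Δ}.Nonempty :=
      ⟨r, hrpos, Set.smul_mem_smul_set hd⟩
    have hstep : ∀ s : ℝ, m < s → r • d ∈ s • Δ := by
      intro s hs
      have hspos : 0 < s := hm.trans hs
      have hlt : sInf {r' : ℝ | 0 < r' ∧ r • d ∈ r' • Δ} < s := lt_of_le_of_lt hgu hs
      obtain ⟨r', ⟨hr'pos, hu⟩, hr's⟩ := exists_lt_of_csInf_lt hne hlt
      obtain ⟨d', hd', hd'u⟩ := hu
      beta_reduce at hd'u
      rw [← hd'u]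
      have hmem : (r'/s) • d' ∈ Δ :=
        hconv.smul_mem_of_zero_mem h0 hd'
          ⟨by positivity, by rw [div_le_one hspos]; exact hr's.le⟩
      have : r' • d' = s • ((r'/s) • d') := by
        rw [smul_smul, mul_div_cancel₀ _ hspos.ne']
      rw [this]
      exact Set.smul_mem_smul_set hmem
    have hseq : ∀ k : ℕ, (m + 1/((k:ℝ)+1))⁻¹ • (r • d) ∈ Δ := by
      intro k
      have h1 : m < m + 1/((k:ℝ)+1) := by
        have : (0:ℝ) < 1/((k:ℝ)+1) := by positivity
        linarith
      obtain ⟨d', hd', hd'u⟩ := hstep _ h1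
      beta_reduce at hd'u
      rw [← hd'u, smul_smul, inv_mul_cancel₀ (by positivity), one_smul]
      exact hd'
    have hlim : Tendsto (fun k : ℕ => (m + 1/((k:ℝ)+1))⁻¹ • (r • d)) atTop
        (𝓝 (m⁻¹ • (r • d))) := by
      apply Tendsto.smul_const
      apply Tendsto.inv₀ _ hm.ne'
      have : Tendsto (fun k : ℕ => 1/((k:ℝ)+1)) atTop (𝓝 0) :=
        tendsto_one_div_add_atTop_nhds_zero_nat
      simpa using tendsto_const_nhds.add this
    have hmem : m⁻¹ • (r • d) ∈ Δ :=
      hcl.mem_of_tendsto hlim (Filter.Eventually.of_forall hseq)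
    have : r • d = m • (m⁻¹ • (r • d)) := by
      rw [smul_smul, mul_inv_cancel₀ hm.ne', one_smul]
    rw [this]
    exact Set.smul_mem_smul_set hmem
  · rintro ⟨d, hd, rfl⟩
    constructor
    · exact ⟨m, hm.le, d, hd, by beta_reduce; rfl⟩
    · exact gauge_le_of_mem hm.le (Set.smul_mem_smul_set hd)

/-! ### ncard of disjoint unions -/

lemma aux_ncard_biUnion {α : Type*} (S : ℕ → Set α) (hfin : ∀ k, (S k).Finite)
    (hdisj : ∀ k k', k ≠ k' → Disjoint (S k) (S k')) : ∀ K : ℕ,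
    (⋃ k ∈ Finset.range K, S k).ncard = ∑ k ∈ Finset.range K, (S k).ncard := by
  intro K
  induction K with
  | zero => simp
  | succ K ih =>
    rw [Finset.range_add_one]
    have h1 : (⋃ k ∈ insert K (Finset.range K), S k)
        = (⋃ k ∈ Finset.range K, S k) ∪ S K := by
      simp [Set.biUnion_insert, Set.union_comm]
    have hUfin : (⋃ k ∈ Finset.range K, S k).Finite :=
      Set.Finite.biUnion (Finset.range K).finite_toSet (fun k _ => hfin k)
    have hdisj2 : Disjoint (⋃ k ∈ Finset.range K, S k) (S K) := by
      apply Set.disjoint_left.2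
      intro x hx hxK
      obtain ⟨k, hk, hxk⟩ := Set.mem_iUnion₂.1 hx
      simp only [Finset.mem_range] at hk
      exact Set.disjoint_left.1 (hdisj k K (by omega)) hxk hxK
    rw [h1, Set.ncard_union_eq hdisj2 hUfin (hfin K), ih,
      Finset.sum_insert (by simp), Nat.add_comm]

end Aux

section Main
open Filter Topology MeasureTheory Set Finset
open scoped Pointwise

/-- The value at `T = 1` of the polynomial
`P_t(T) = (1 - T^M)^n ∑_{k ≥ 0} W_t(k) T^k` equals `n!` times the Lebesgue volume of `Δ`:
`P_t(1) = n!·vol(Δ)`. -/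
theorem P_at_one_equals_normalized_volume
    (n : ℕ) (hn : 1 ≤ n) (S : Finset (Fin n → ℤ))
    (Δ : Set (Fin n → ℝ))
    (hΔ : Δ = convexHull ℝ
      (((fun u : Fin n → ℤ => fun j => (u j : ℝ)) '' (S : Set (Fin n → ℤ))) ∪ {0}))
    (hspan : Submodule.span ℝ Δ = ⊤)
    (N : ℕ) (hN : 1 ≤ N) (t : Fin n → ℤ)
    -- `D` : the least positive integer with `D · deg u ∈ ℤ` for all `u ∈ L_0(Δ)`
    (D : ℕ) (hD : 0 < D)
    (hDint : ∀ u ∈ latticePts Δ N (fun _ => (0 : ℤ)),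
      ∃ z : ℤ, (D : ℝ) * gauge Δ u = (z : ℝ))
    (hDmin : ∀ D' : ℕ, 0 < D' →
      (∀ u ∈ latticePts Δ N (fun _ => (0 : ℤ)),
        ∃ z : ℤ, (D' : ℝ) * gauge Δ u = (z : ℝ)) → D ≤ D')
    -- each `W_t(k)` is finite, and `M · deg u ∈ ℤ` on `L_t(Δ)`
    (hfin : ∀ k : ℕ,
      {u | u ∈ latticePts Δ N t ∧ gauge Δ u = (k : ℝ) / ((D * N : ℕ) : ℝ)}.Finite)
    (hMdeg : ∀ u ∈ latticePts Δ N t,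
      ∃ z : ℤ, ((D * N : ℕ) : ℝ) * gauge Δ u = (z : ℝ))
    -- `P_t` is the polynomial `∑_{k ≤ l} c_k T^k` with non-negative integer coefficients
    (c : ℕ → ℕ) (l : ℕ)
    (hc : ∀ k : ℕ, PowerSeries.coeff (R := ℤ) k
      ((1 - PowerSeries.X ^ (D * N)) ^ n *
        PowerSeries.mk fun j => (Wcount Δ N (D * N) t j : ℤ)) = (c k : ℤ))
    (hcl : ∀ k : ℕ, l < k → c k = 0) :
    ((∑ k ∈ Finset.range (l + 1), c k : ℕ) : ℝ≥0∞)
      = (n.factorial : ℝ≥0∞) * MeasureTheory.volume Δ := by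
  have hM : 0 < D * N := Nat.mul_pos hD (by omega)
  have hMne : ((D * N : ℕ) : ℝ) ≠ 0 := Nat.cast_ne_zero.2 hM.ne'
  have hMposR : (0:ℝ) < ((D * N : ℕ) : ℝ) := by exact_mod_cast hM
  -- basic properties of Δ
  have hfinS : (((fun u : Fin n → ℤ => fun j => (u j : ℝ)) '' (S : Set (Fin n → ℤ)))
      ∪ {0}).Finite := (S.finite_toSet.image _).union (Set.finite_singleton 0)
  have hconv : Convex ℝ Δ := by rw [hΔ]; exact convex_convexHull ℝ _
  have hcomp : IsCompact Δ := by rw [hΔ]; exact hfinS.isCompact_convexHull (𝕜 := ℝ)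
  have hclosed : IsClosed Δ := hcomp.isClosed
  have h0Δ : (0 : Fin n → ℝ) ∈ Δ := by
    rw [hΔ]; exact subset_convexHull ℝ _ (Or.inr rfl)
  -- the counting sets
  set Cnt : ℕ → Set (Fin n → ℝ) := fun m =>
    {u | (∃ z : Fin n → ℤ, ∀ j, u j = (t j : ℝ) / (N : ℝ) + (z j : ℝ)) ∧ u ∈ (m : ℝ) • Δ}
    with hCnt
  set Sk : ℕ → Set (Fin n → ℝ) := fun k =>
    {u | u ∈ latticePts Δ N t ∧ gauge Δ u = (k : ℝ) / ((D * N : ℕ) : ℝ)} with hSk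
  have hSkdisj : ∀ k k', k ≠ k' → Disjoint (Sk k) (Sk k') := by
    intro k k' hkk'
    apply Set.disjoint_left.2
    rintro u ⟨_, h1⟩ ⟨_, h2⟩
    rw [h1] at h2
    have h3 : (k:ℝ) = (k':ℝ) := by
      field_simp at h2
      exact_mod_cast h2
    exact hkk' (by exact_mod_cast h3)
  have hsets : ∀ m : ℕ, 1 ≤ m → Cnt m = ⋃ k ∈ Finset.range (m * (D*N) + 1), Sk k := by
    intro m hm
    have hmpos : (0:ℝ) < (m:ℕ) := by exact_mod_cast hm
    ext u
    constructor
    · rintro ⟨⟨z, hz⟩, humem⟩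
      obtain ⟨hcone, hgle⟩ := (aux_mem_smul_iff_gauge Δ hconv hclosed h0Δ hmpos u).2 humem
      have hulat : u ∈ latticePts Δ N t := ⟨hcone, z, hz⟩
      obtain ⟨zz, hzz⟩ := hMdeg u hulat
      have hzz0 : 0 ≤ zz := by
        have : (0:ℝ) ≤ (zz:ℝ) := by
          rw [← hzz]; exact mul_nonneg (Nat.cast_nonneg _) (gauge_nonneg _)
        exact_mod_cast this
      have hk : ((zz.toNat : ℕ) : ℝ) = ((D * N : ℕ) : ℝ) * gauge Δ u := by
        have h4 : ((zz.toNat : ℕ) : ℝ) = (zz : ℝ) := by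
          exact_mod_cast congrArg (fun x : ℤ => (x : ℝ)) (Int.toNat_of_nonneg hzz0)
        rw [h4, ← hzz]
      have hgauge : gauge Δ u = ((zz.toNat : ℕ) : ℝ) / ((D * N : ℕ) : ℝ) := by
        rw [eq_div_iff hMne]; linarith [hk]
      have hkle : (zz.toNat : ℕ) ≤ m * (D * N) := by
        have h1 : ((zz.toNat : ℕ) : ℝ) ≤ ((D * N : ℕ) : ℝ) * m := by
          rw [hk]
          exact mul_le_mul_of_nonneg_left hgle (Nat.cast_nonneg _)
        have h2 : ((zz.toNat : ℕ) : ℝ) ≤ ((m * (D * N) : ℕ) : ℝ) := by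
          push_cast at h1 ⊢; linarith
        exact_mod_cast h2
      exact Set.mem_biUnion (Finset.mem_range.2 (by omega)) ⟨hulat, hgauge⟩
    · intro hu
      obtain ⟨k, hk, huk⟩ := Set.mem_iUnion₂.1 hu
      obtain ⟨⟨hcone, z, hz⟩, hgauge⟩ := huk
      have hkle : k ≤ m * (D * N) := by
        have := Finset.mem_range.1 hk; omega
      have hgle : gauge Δ u ≤ (m:ℕ) := by
        rw [hgauge, div_le_iff₀ hMposR]
        have h2 : ((k:ℕ) : ℝ) ≤ ((m * (D * N) : ℕ) : ℝ) := by exact_mod_cast hkle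
        push_cast at h2 ⊢; linarith
      exact ⟨⟨z, hz⟩, (aux_mem_smul_iff_gauge Δ hconv hclosed h0Δ hmpos u).1 ⟨hcone, hgle⟩⟩
  have hCntfin : ∀ m : ℕ, (Cnt m).Finite := by
    intro m
    rcases Nat.eq_zero_or_pos m with rfl | hm
    · apply Set.Finite.subset (Set.finite_singleton 0)
      rintro u ⟨_, humem⟩
      rw [Nat.cast_zero] at humem
      have h5 : u ∈ (0 : Set (Fin n → ℝ)) := Set.zero_smul_set_subset (α := ℝ) Δ humem
      simpa using h5
    · rw [hsets m hm]
      exact Set.Finite.biUnion (Finset.range _).finite_toSet (fun k _ => hfin k)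
  have hcount : ∀ m : ℕ, 1 ≤ m →
      (Cnt m).ncard = ∑ k ∈ Finset.range (m * (D*N) + 1), Wcount Δ N (D * N) t k := by
    intro m hm
    rw [hsets m hm, aux_ncard_biUnion Sk hfin hSkdisj]
    rfl
  -- geometric limit
  have hgeo : Tendsto (fun m : ℕ =>
      ((Cnt m).ncard : ℝ≥0∞) * (ENNReal.ofReal (1/(m:ℝ)))^n) atTop (𝓝 (volume Δ)) :=
    aux_count_div_tendsto n Δ hconv hcomp (fun j => (t j : ℝ) / (N : ℝ)) hCntfin
  have hvol_ne : volume Δ ≠ ⊤ := hcomp.measure_lt_top.ne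
  have hgeoR : Tendsto (fun m : ℕ => ((Cnt m).ncard : ℝ) * (1/(m:ℝ))^n) atTop
      (𝓝 ((volume Δ).toReal)) := by
    have h := (ENNReal.tendsto_toReal hvol_ne).comp hgeo
    apply h.congr'
    filter_upwards [eventually_ge_atTop 1] with m hm
    have h1 : (0:ℝ) ≤ 1/(m:ℝ) := by positivity
    simp [Function.comp, ENNReal.toReal_mul, ENNReal.toReal_pow, ENNReal.toReal_ofReal h1]
  -- power series identity
  have hpse := aux_partial_sum_eq (D*N) hM n (fun j => (Wcount Δ N (D * N) t j : ℤ))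
    (fun k => (c k : ℤ)) l hc (fun k hk => by show ((c k : ℤ)) = 0; rw [hcl k hk]; norm_num)
  set A : ℕ → ℕ := fun j => ∑ k ∈ Finset.range (j+1), Wcount Δ N (D * N) t k with hA
  have hid : ∀ m : ℕ, l ≤ m → ((A (m * (D*N)) : ℕ) : ℝ)
      = ∑ k ∈ Finset.range (l+1),
          (c k : ℝ) * ((((m * (D*N) - k) / (D*N) + n).choose n : ℕ) : ℝ) := by
    intro m hm
    have hj : l ≤ m * (D*N) := le_trans hm (Nat.le_mul_of_pos_right m hM)
    have h0 := hpse (m * (D*N)) hj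
    beta_reduce at h0
    rw [hA]
    beta_reduce
    exact_mod_cast h0
  set ρ : ℕ := ∑ k ∈ Finset.range (l + 1), c k with hρdef
  -- bounds
  have hbound : ∀ m : ℕ, l ≤ m →
      (ρ : ℝ) * (((m - l + n).choose n : ℕ) : ℝ) ≤ ((A (m * (D*N)) : ℕ) : ℝ) ∧
      ((A (m * (D*N)) : ℕ) : ℝ) ≤ (ρ : ℝ) * (((m + n).choose n : ℕ) : ℝ) := by
    intro m hm
    have hdiv : ∀ k : ℕ, k ≤ l →
        m - l ≤ (m * (D*N) - k) / (D*N) ∧ (m * (D*N) - k) / (D*N) ≤ m := by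
      intro k hk
      constructor
      · rw [Nat.le_div_iff_mul_le hM, Nat.sub_mul]
        apply Nat.sub_le_sub_left
        exact le_trans hk (Nat.le_mul_of_pos_right l hM)
      · calc (m * (D*N) - k) / (D*N) ≤ (m * (D*N)) / (D*N) :=
            Nat.div_le_div_right (Nat.sub_le _ _)
          _ = m := Nat.mul_div_cancel m hM
    rw [hid m hm, hρdef]
    constructor
    · push_cast
      rw [Finset.sum_mul]
      apply Finset.sum_le_sum
      intro k hk
      simp only [Finset.mem_range] at hk
      have h1 := (hdiv k (by omega)).1
      have h2 : ((m - l + n).choose n : ℕ) ≤ (((m * (D*N) - k) / (D*N) + n).choose n : ℕ) :=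
        Nat.choose_le_choose n (by omega)
      have h3 : (((m - l + n).choose n : ℕ) : ℝ)
          ≤ ((((m * (D*N) - k) / (D*N) + n).choose n : ℕ) : ℝ) := by exact_mod_cast h2
      have h4 : (0:ℝ) ≤ (c k : ℝ) := Nat.cast_nonneg _
      nlinarith
    · push_cast
      rw [Finset.sum_mul]
      apply Finset.sum_le_sum
      intro k hk
      simp only [Finset.mem_range] at hk
      have h1 := (hdiv k (by omega)).2
      have h2 : ((((m * (D*N) - k) / (D*N) + n).choose n : ℕ) : ℝ)
          ≤ (((m + n).choose n : ℕ) : ℝ) := by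
        exact_mod_cast Nat.choose_le_choose n (by omega)
      have h4 : (0:ℝ) ≤ (c k : ℝ) := Nat.cast_nonneg _
      nlinarith
  -- the squeeze limit
  set f : ℕ → ℝ := fun m => ((A (m * (D*N)) : ℕ) : ℝ) / (m:ℝ)^n with hf
  have hflim : Tendsto f atTop (𝓝 ((ρ:ℝ) / (n.factorial : ℝ))) := by
    have hlow : Tendsto (fun m : ℕ => (ρ:ℝ) * ((((m - l + n).choose n : ℕ):ℝ) / (m:ℝ)^n))
        atTop (𝓝 ((ρ:ℝ) * (1 / (n.factorial : ℝ)))) :=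
      (aux_choose_div_pow_tendsto n l).const_mul _
    have hhigh : Tendsto (fun m : ℕ => (ρ:ℝ) * ((((m + n).choose n : ℕ):ℝ) / (m:ℝ)^n))
        atTop (𝓝 ((ρ:ℝ) * (1 / (n.factorial : ℝ)))) := by
      have := (aux_choose_div_pow_tendsto n 0).const_mul (ρ:ℝ)
      simpa using this
    have h1 : ((ρ:ℝ) * (1 / (n.factorial : ℝ))) = (ρ:ℝ) / (n.factorial : ℝ) := by ring
    rw [← h1]
    apply tendsto_of_tendsto_of_tendsto_of_le_of_le' hlow hhigh
    · filter_upwards [eventually_ge_atTop (l+1)] with m hm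
      have hmR : (0:ℝ) < (m:ℝ) := by exact_mod_cast (show 0 < m by omega)
      have hmpos : (0:ℝ) < (m:ℝ)^n := pow_pos hmR n
      have hb := (hbound m (by omega)).1
      show (ρ:ℝ) * ((((m - l + n).choose n : ℕ):ℝ) / (m:ℝ)^n)
        ≤ ((A (m * (D*N)) : ℕ):ℝ) / (m:ℝ)^n
      rw [← mul_div_assoc]
      exact (div_le_div_iff_of_pos_right hmpos).2 hb
    · filter_upwards [eventually_ge_atTop (l+1)] with m hm
      have hmR : (0:ℝ) < (m:ℝ) := by exact_mod_cast (show 0 < m by omega)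
      have hmpos : (0:ℝ) < (m:ℝ)^n := pow_pos hmR n
      have hb := (hbound m (by omega)).2
      show ((A (m * (D*N)) : ℕ):ℝ) / (m:ℝ)^n
        ≤ (ρ:ℝ) * ((((m + n).choose n : ℕ):ℝ) / (m:ℝ)^n)
      rw [← mul_div_assoc]
      exact (div_le_div_iff_of_pos_right hmpos).2 hb
  -- identify the two limits
  have hfgeo : Tendsto f atTop (𝓝 ((volume Δ).toReal)) := by
    apply hgeoR.congr'
    filter_upwards [eventually_ge_atTop (max 1 (l+1))] with m hm
    have hm1 : 1 ≤ m := le_trans (le_max_left _ _) hm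
    have hmR : (0:ℝ) < (m:ℝ) := by exact_mod_cast hm1
    have hXeq : (Cnt m).ncard = A (m * (D*N)) := by rw [hcount m hm1]
    show ((Cnt m).ncard : ℝ) * (1/(m:ℝ))^n = ((A (m * (D*N)) : ℕ):ℝ) / (m:ℝ)^n
    rw [hXeq, one_div, inv_pow, div_eq_mul_inv]
  have huniq : (ρ:ℝ) / (n.factorial : ℝ) = (volume Δ).toReal :=
    tendsto_nhds_unique hflim hfgeo
  have hfacpos : (0:ℝ) < (n.factorial : ℝ) := by positivity
  have hρeq : (ρ:ℝ) = (n.factorial : ℝ) * (volume Δ).toReal := by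
    field_simp at huniq
    linarith
  calc ((ρ:ℕ) : ℝ≥0∞) = ENNReal.ofReal (ρ:ℝ) := (ENNReal.ofReal_natCast ρ).symm
    _ = ENNReal.ofReal ((n.factorial : ℝ) * (volume Δ).toReal) := by rw [hρeq]
    _ = ENNReal.ofReal (n.factorial : ℝ) * ENNReal.ofReal ((volume Δ).toReal) :=
        ENNReal.ofReal_mul (by positivity)
    _ = (n.factorial : ℝ≥0∞) * volume Δ := by
        rw [ENNReal.ofReal_natCast, ENNReal.ofReal_toReal hvol_ne]


end Main
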